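/- Existence and uniqueness for the time-discrete extended Maxwell model (Theorem 4.1): let τ > 0, N ∈ ℕ, and for k = 0, …, N let ℓ^k ∈ X' and g^k ∈ X be given, and let φ⁰ ∈ Ψ. Then there exists a unique family (u^k, φ^k) ∈ (g^k + V) × Ψ, k = 0, …, N, such that φ⁰ is the given initial value and: (a) ⟪C(e u^k − φ^k), e v⟫_Ψ = ℓ^k(v) for all v ∈ V and all k = 0, …, N; (b) η(φ^k − φ^{k−1})/τ + α φ^k − C(e u^k − φ^k) = 0 in Ψ for all k = 1, …, N. -/
import Mathlib
set_option maxHeartbeats 1000000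
open scoped RealInnerProductSpace

lemma laxV_aux {X Ψ : Type*}
    [NormedAddCommGroup X] [InnerProductSpace ℝ X] [CompleteSpace X]
    [NormedAddCommGroup Ψ] [InnerProductSpace ℝ Ψ] [CompleteSpace Ψ]
    (V : Submodule ℝ X) (hV : IsClosed (V : Set X))
    (e : X →L[ℝ] Ψ) (S : Ψ →L[ℝ] Ψ) (c : ℝ) (hc : 0 < c)
    (hcoer : ∀ v ∈ V, c * ‖v‖ ^ 2 ≤ ⟪S (e v), e v⟫) (F : X →L[ℝ] ℝ) :
    ∃ w, w ∈ V ∧ (∀ v ∈ V, ⟪S (e w), e v⟫ = F v) ∧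
      ∀ w', w' ∈ V → (∀ v ∈ V, ⟪S (e w'), e v⟫ = F v) → w' = w := by
  haveI : CompleteSpace V := hV.completeSpace_coe
  set E : V →L[ℝ] Ψ := e.comp V.subtypeL with hE
  set B : V →L[ℝ] V →L[ℝ] ℝ := (innerSL ℝ).bilinearComp (S.comp E) E with hB
  have hBapp : ∀ x y : V, B x y = ⟪S (e (x : X)), e (y : X)⟫ := fun x y => rfl
  have coer : IsCoercive B := by
    refine ⟨c, hc, fun u => ?_⟩
    have h := hcoer u u.2
    rw [hBapp]
    calc c * ‖u‖ * ‖u‖ = c * ‖(u : X)‖ ^ 2 := by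
          rw [Submodule.norm_coe]; ring
      _ ≤ _ := h
  set f : V := (InnerProductSpace.toDual ℝ V).symm (F.comp V.subtypeL) with hf
  have hfapp : ∀ v : V, ⟪f, v⟫ = F v := by
    intro v
    rw [hf, InnerProductSpace.toDual_symm_apply]
    rfl
  set w : V := coer.continuousLinearEquivOfBilin.symm f with hw
  have hweq : ∀ v : V, ⟪S (e (w : X)), e (v : X)⟫ = F v := by
    intro v
    have h := coer.continuousLinearEquivOfBilin_apply w v
    rw [hw, ContinuousLinearEquiv.apply_symm_apply] at h
    rw [← hBapp, ← h, hfapp]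
  refine ⟨w, w.2, fun v hv => hweq ⟨v, hv⟩, ?_⟩
  intro w' hw' heq'
  have hd : (w' - (w : X)) ∈ V := V.sub_mem hw' w.2
  have hzero : ⟪S (e (w' - (w : X))), e (w' - (w : X))⟫ = 0 := by
    have h1 := heq' _ hd
    have h2 := hweq ⟨_, hd⟩
    simp only [map_sub, inner_sub_left, inner_sub_right] at h1 h2 ⊢
    linarith
  have := hcoer _ hd
  rw [hzero] at this
  have hn : ‖w' - (w : X)‖ ^ 2 ≤ 0 := by nlinarith
  have : w' - (w : X) = 0 := by
    have := sq_nonneg ‖w' - (w : X)‖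
    have hnn : ‖w' - (w : X)‖ ^ 2 = 0 := le_antisymm hn (by positivity)
    simpa [pow_eq_zero_iff] using hnn
  exact sub_eq_zero.mp this

/-- Existence and uniqueness for the time-discrete extended Maxwell model
(Theorem 4.1): there is a unique family `(u^k, φ^k) ∈ (g^k + V) × Ψ`, `k = 0, …, N`,
with initial value `φ⁰`, satisfying the discrete weak formulation. -/
theorem stmt_6
    {X Ψ : Type*}
    [NormedAddCommGroup X] [InnerProductSpace ℝ X] [CompleteSpace X]
    [NormedAddCommGroup Ψ] [InnerProductSpace ℝ Ψ] [CompleteSpace Ψ]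
    (V : Submodule ℝ X) (hV : IsClosed (V : Set X))
    (e : X →L[ℝ] Ψ) (C : Ψ →L[ℝ] Ψ)
    (hCsym : ∀ φ ψ : Ψ, ⟪C φ, ψ⟫ = ⟪φ, C ψ⟫)
    (cstar : ℝ) (hcstar : 0 < cstar)
    (hCcoer : ∀ ψ : Ψ, cstar * ‖ψ‖ ^ 2 ≤ ⟪C ψ, ψ⟫)
    (c₀ : ℝ) (hc₀ : 0 < c₀)
    (hacoer : ∀ v ∈ V, c₀ * ‖v‖ ^ 2 ≤ ⟪C (e v), e v⟫)
    (η α : ℝ) (hη : 0 < η) (hα : 0 ≤ α)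
    (τ : ℝ) (hτ : 0 < τ) (N : ℕ)
    (ℓ : ℕ → X →L[ℝ] ℝ) (g : ℕ → X) (φ0 : Ψ) :
    ∃ (u : ℕ → X) (φ : ℕ → Ψ),
      (φ 0 = φ0 ∧
       (∀ k ≤ N, u k - g k ∈ V) ∧
       (∀ k ≤ N, ∀ v ∈ V, ⟪C (e (u k) - φ k), e v⟫ = ℓ k v) ∧
       (∀ k, 1 ≤ k → k ≤ N →
         (η / τ) • (φ k - φ (k - 1)) + α • φ k - C (e (u k) - φ k) = 0)) ∧
      (∀ (u' : ℕ → X) (φ' : ℕ → Ψ),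
        φ' 0 = φ0 →
        (∀ k ≤ N, u' k - g k ∈ V) →
        (∀ k ≤ N, ∀ v ∈ V, ⟪C (e (u' k) - φ' k), e v⟫ = ℓ k v) →
        (∀ k, 1 ≤ k → k ≤ N →
          (η / τ) • (φ' k - φ' (k - 1)) + α • φ' k - C (e (u' k) - φ' k) = 0) →
        ∀ k ≤ N, u' k = u k ∧ φ' k = φ k) := by
  classical
  obtain ⟨γ, hγdef⟩ : ∃ x : ℝ, x = η / τ := ⟨_, rfl⟩
  have hγ : 0 < γ := hγdef ▸ div_pos hη hτ
  obtain ⟨β, hβdef⟩ : ∃ x : ℝ, x = γ + α := ⟨_, rfl⟩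
  have hβ : 0 < β := by rw [hβdef]; positivity
  obtain ⟨T, hTapp⟩ : ∃ T : Ψ →L[ℝ] Ψ, ∀ ψ, T ψ = β • ψ + C ψ :=
    ⟨β • ContinuousLinearMap.id ℝ Ψ + C, fun ψ => rfl⟩
  -- invert T via Lax–Milgram
  obtain ⟨R, hTR, hRT⟩ : ∃ R : Ψ →L[ℝ] Ψ, (∀ ψ, T (R ψ) = ψ) ∧ (∀ ψ, R (T ψ) = ψ) := by
    set B0 : Ψ →L[ℝ] Ψ →L[ℝ] ℝ :=
      (innerSL ℝ).bilinearComp T (ContinuousLinearMap.id ℝ Ψ) with hB0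
    have hB0app : ∀ x y : Ψ, B0 x y = ⟪T x, y⟫ := fun x y => rfl
    have coerT : IsCoercive B0 := by
      refine ⟨β, hβ, fun ψ => ?_⟩
      have h1 := hCcoer ψ
      have h2 : B0 ψ ψ = β * ‖ψ‖ ^ 2 + ⟪C ψ, ψ⟫ := by
        rw [hB0app, hTapp, inner_add_left, real_inner_smul_left,
          real_inner_self_eq_norm_sq]
      rw [h2]
      nlinarith [sq_nonneg ‖ψ‖]
    set Teq := coerT.continuousLinearEquivOfBilin with hTeqdef
    have hTeq : ∀ ψ, Teq ψ = T ψ := by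
      intro ψ
      apply ext_inner_right ℝ
      intro χ
      rw [coerT.continuousLinearEquivOfBilin_apply]
      exact hB0app ψ χ
    refine ⟨(Teq.symm : Ψ →L[ℝ] Ψ), fun ψ => ?_, fun ψ => ?_⟩
    · rw [ContinuousLinearEquiv.coe_coe, ← hTeq]
      exact Teq.apply_symm_apply ψ
    · rw [ContinuousLinearEquiv.coe_coe, ← hTeq]
      exact Teq.symm_apply_apply ψ
  have hTinj : ∀ a b, T a = T b → a = b := fun a b h => by
    rw [← hRT a, ← hRT b, h]
  have hcomm : ∀ ψ, R (C ψ) = C (R ψ) := by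
    intro ψ
    apply hTinj
    rw [hTR]
    have h1 : T (C (R ψ)) = C (T (R ψ)) := by
      rw [hTapp, hTapp, map_add, map_smul]
    rw [h1, hTR]
  obtain ⟨D, hDapp⟩ : ∃ D : Ψ →L[ℝ] Ψ, ∀ ψ, D ψ = β • C (R ψ) :=
    ⟨β • (C.comp R), fun _ => rfl⟩
  have hkey : ∀ ψ, C ψ - C (R (C ψ)) = D ψ := by
    intro ψ
    have h := hTR (C ψ)
    rw [hTapp] at h
    rw [hDapp, ← hcomm ψ, sub_eq_iff_eq_add]
    exact h.symm
  obtain ⟨κ, hκdef⟩ : ∃ x : ℝ, x = min cstar β / 2 := ⟨_, rfl⟩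
  have hκ : 0 < κ := by
    have := lt_min hcstar hβ
    rw [hκdef]; linarith
  have hκc : 2 * κ ≤ cstar := by
    have := min_le_left cstar β; rw [hκdef]; linarith
  have hκb : 2 * κ ≤ β := by
    have := min_le_right cstar β; rw [hκdef]; linarith
  have hDcoer : ∀ ψ, κ * ‖ψ‖ ^ 2 ≤ ⟪D ψ, ψ⟫ := by
    intro ψ
    have hψ : β • R ψ + C (R ψ) = ψ := by rw [← hTapp]; exact hTR ψ
    set χ : Ψ := R ψ with hχ
    have h1 : ⟪D ψ, ψ⟫ = β ^ 2 * ⟪C χ, χ⟫ + β * ‖C χ‖ ^ 2 := by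
      rw [hDapp, ← hχ, ← hψ, inner_add_right, real_inner_smul_left,
        real_inner_smul_left, real_inner_smul_right,
        real_inner_self_eq_norm_sq]
      ring
    have h2 : ‖ψ‖ ^ 2 ≤ 2 * (β ^ 2 * ‖χ‖ ^ 2 + ‖C χ‖ ^ 2) := by
      have hb : ‖ψ‖ ≤ β * ‖χ‖ + ‖C χ‖ := by
        calc ‖ψ‖ = ‖β • χ + C χ‖ := by rw [hψ]
          _ ≤ ‖β • χ‖ + ‖C χ‖ := norm_add_le _ _
          _ = β * ‖χ‖ + ‖C χ‖ := by
              rw [norm_smul, Real.norm_eq_abs, abs_of_pos hβ]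
      nlinarith [norm_nonneg ψ, norm_nonneg χ, norm_nonneg (C χ),
        sq_nonneg (β * ‖χ‖ - ‖C χ‖)]
    have h3 := hCcoer χ
    rw [h1]
    nlinarith [mul_le_mul_of_nonneg_left h3 (sq_nonneg β),
      mul_le_mul_of_nonneg_left h2 hκ.le,
      mul_nonneg (mul_nonneg (sub_nonneg.mpr hκc) (sq_nonneg β)) (sq_nonneg ‖χ‖),
      mul_nonneg (sub_nonneg.mpr hκb) (sq_nonneg ‖C χ‖)]
  obtain ⟨c₁, hc₁def⟩ : ∃ x : ℝ, x = κ * c₀ / (‖C‖ + 1) := ⟨_, rfl⟩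
  have hC1 : (0:ℝ) < ‖C‖ + 1 := by positivity
  have hc₁ : 0 < c₁ := by rw [hc₁def]; positivity
  have hc₁mul : c₁ * (‖C‖ + 1) = κ * c₀ := by
    rw [hc₁def]; field_simp
  have hDV : ∀ v ∈ V, c₁ * ‖v‖ ^ 2 ≤ ⟪D (e v), e v⟫ := by
    intro v hv
    have hev : c₀ * ‖v‖ ^ 2 ≤ (‖C‖ + 1) * ‖e v‖ ^ 2 := by
      have h := hacoer v hv
      have hb : ⟪C (e v), e v⟫ ≤ ‖C (e v)‖ * ‖e v‖ := real_inner_le_norm _ _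
      have hb2 : ‖C (e v)‖ ≤ ‖C‖ * ‖e v‖ := C.le_opNorm _
      nlinarith [norm_nonneg (e v), norm_nonneg (C (e v)), norm_nonneg C]
    have h := hDcoer (e v)
    nlinarith [mul_le_mul_of_nonneg_left hev hκ.le,
      mul_le_mul_of_nonneg_left h hC1.le, hc₁mul, sq_nonneg ‖v‖]
  -- right-hand sides
  obtain ⟨F0, hF0⟩ : ∃ F : X →L[ℝ] ℝ,
      ∀ v, F v = ℓ 0 v + ⟪C φ0, e v⟫ - ⟪C (e (g 0)), e v⟫ :=
    ⟨ℓ 0 + (innerSL ℝ (C φ0)).comp e - (innerSL ℝ (C (e (g 0)))).comp e,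
      fun v => rfl⟩
  obtain ⟨Fk, hFk⟩ : ∃ F : ℕ → Ψ → (X →L[ℝ] ℝ),
      ∀ k ψ v, F k ψ v = ℓ k v + γ * ⟪C (R ψ), e v⟫ - ⟪D (e (g k)), e v⟫ :=
    ⟨fun k ψ => ℓ k + γ • ((innerSL ℝ (C (R ψ))).comp e)
        - (innerSL ℝ (D (e (g k)))).comp e,
      fun _ _ _ => rfl⟩
  obtain ⟨w0, hw0V, hw0, hw0u⟩ := laxV_aux V hV e C c₀ hc₀ hacoer F0
  have hstep := fun (k : ℕ) (ψ : Ψ) => laxV_aux V hV e D c₁ hc₁ hDV (Fk k ψ)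
  choose W hWV hWeq hWu using hstep
  -- the recursively defined solution
  obtain ⟨P, hP0u, hP0f, hPsu, hPsf⟩ : ∃ P : ℕ → X × Ψ,
      (P 0).1 = g 0 + w0 ∧ (P 0).2 = φ0 ∧
      (∀ k, (P (k+1)).1 = g (k+1) + W (k+1) (P k).2) ∧
      (∀ k, (P (k+1)).2 = R (C (e (g (k+1) + W (k+1) (P k).2)) + γ • (P k).2)) :=
    ⟨fun n => Nat.rec (motive := fun _ => X × Ψ) (g 0 + w0, φ0)
      (fun k p => (g (k+1) + W (k+1) p.2,
        R (C (e (g (k+1) + W (k+1) p.2)) + γ • p.2))) n,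
      rfl, rfl, fun _ => rfl, fun _ => rfl⟩
  -- key computation for condition (a) at steps ≥ 1
  have hmain : ∀ (ψp : Ψ) (uu : X) (v : X),
      ⟪C (e uu - R (C (e uu) + γ • ψp)), e v⟫
        = ⟪D (e uu), e v⟫ - γ * ⟪C (R ψp), e v⟫ := by
    intro ψp uu v
    have h1 : C (e uu - R (C (e uu) + γ • ψp))
        = (C (e uu) - C (R (C (e uu)))) - γ • C (R ψp) := by
      rw [map_sub, map_add, map_smul, map_add, map_smul]
      abel
    rw [h1, inner_sub_left, hkey, real_inner_smul_left]
  -- key computation for condition (b)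
  have hbgen : ∀ (ψp : Ψ) (uu : X),
      γ • (R (C (e uu) + γ • ψp) - ψp) + α • R (C (e uu) + γ • ψp)
        - C (e uu - R (C (e uu) + γ • ψp)) = 0 := by
    intro ψp uu
    have h := hTR (C (e uu) + γ • ψp)
    rw [hTapp] at h
    have heq : γ • (R (C (e uu) + γ • ψp) - ψp) + α • R (C (e uu) + γ • ψp)
        - C (e uu - R (C (e uu) + γ • ψp))
        = (β • R (C (e uu) + γ • ψp) + C (R (C (e uu) + γ • ψp)))
          - (C (e uu) + γ • ψp) := by
      rw [hβdef, add_smul, map_sub]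
      module
    rw [heq, h, sub_self]
  refine ⟨fun k => (P k).1, fun k => (P k).2, ⟨hP0f, ?_, ?_, ?_⟩, ?_⟩
  · -- membership
    intro k _
    show (P k).1 - g k ∈ V
    cases k with
    | zero => rw [hP0u, add_sub_cancel_left]; exact hw0V
    | succ k => rw [hPsu k, add_sub_cancel_left]; exact hWV _ _
  · -- condition (a)
    intro k _ v hv
    show ⟪C (e ((P k).1) - (P k).2), e v⟫ = ℓ k v
    cases k with
    | zero =>
      rw [hP0u, hP0f]
      have h := hw0 v hv
      rw [hF0] at h
      have hexp : C (e (g 0 + w0) - φ0) = C (e (g 0)) + C (e w0) - C φ0 := by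
        rw [map_add, map_sub, map_add]
      rw [hexp, inner_sub_left, inner_add_left]
      linarith
    | succ k =>
      rw [hPsf k, hPsu k, hmain]
      have h := hWeq (k+1) (P k).2 v hv
      rw [hFk] at h
      have hexp : D (e (g (k+1) + W (k+1) (P k).2))
          = D (e (g (k+1))) + D (e (W (k+1) (P k).2)) := by
        rw [map_add, map_add]
      rw [hexp, inner_add_left]
      linarith
  · -- condition (b)
    intro k hk1 hkN
    cases k with
    | zero => exact absurd hk1 (by omega)
    | succ k =>
      show (η / τ) • ((P (k+1)).2 - (P k).2) + α • (P (k+1)).2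
        - C (e ((P (k+1)).1) - (P (k+1)).2) = 0
      rw [← hγdef, hPsf k, hPsu k]
      exact hbgen (P k).2 _
  · -- uniqueness
    intro u' φ' h0' hV' ha' hb'
    intro k hk
    induction k with
    | zero =>
      have hw' : u' 0 - g 0 ∈ V := hV' 0 hk
      have hsol : ∀ v ∈ V, ⟪C (e (u' 0 - g 0)), e v⟫ = F0 v := by
        intro v hv
        have h := ha' 0 hk v hv
        rw [h0'] at h
        rw [hF0]
        have hexp : C (e (u' 0 - g 0))
            = C (e (u' 0) - φ0) + C φ0 - C (e (g 0)) := by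
          rw [map_sub, map_sub, map_sub]
          abel
        rw [hexp, inner_sub_left, inner_add_left, h]
      have hww := hw0u _ hw' hsol
      constructor
      · show u' 0 = (P 0).1
        rw [hP0u, ← hww]
        abel
      · show φ' 0 = (P 0).2
        rw [hP0f]
        exact h0'
    | succ k ih =>
      have hkN : k ≤ N := Nat.le_of_succ_le hk
      obtain ⟨hu, hφ⟩ := ih hkN
      replace hφ : φ' k = (P k).2 := hφ
      have hT' : T (φ' (k+1)) = C (e (u' (k+1))) + γ • (P k).2 := by
        have h := hb' (k+1) (Nat.le_add_left 1 k) hk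
        rw [← hγdef] at h
        simp only [Nat.add_sub_cancel] at h
        rw [hφ] at h
        have heq2 : β • φ' (k+1) + C (φ' (k+1)) - (C (e (u' (k+1))) + γ • (P k).2)
            = γ • (φ' (k+1) - (P k).2) + α • φ' (k+1)
              - C (e (u' (k+1)) - φ' (k+1)) := by
          rw [hβdef, add_smul, map_sub]
          module
        have h3 : β • φ' (k+1) + C (φ' (k+1))
            - (C (e (u' (k+1))) + γ • (P k).2) = 0 := by
          rw [heq2, h]
        rw [hTapp]
        exact sub_eq_zero.mp h3
      have hφ' : φ' (k+1) = R (C (e (u' (k+1))) + γ • (P k).2) := by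
        rw [← hT', hRT]
      have hw'V : u' (k+1) - g (k+1) ∈ V := hV' (k+1) hk
      have hsol : ∀ v ∈ V, ⟪D (e (u' (k+1) - g (k+1))), e v⟫ = Fk (k+1) (P k).2 v := by
        intro v hv
        have h := ha' (k+1) hk v hv
        rw [hφ', hmain (P k).2 (u' (k+1)) v] at h
        rw [hFk]
        have hexp : D (e (u' (k+1) - g (k+1)))
            = D (e (u' (k+1))) - D (e (g (k+1))) := by
          rw [map_sub, map_sub]
        rw [hexp, inner_sub_left]
        linarith
      have hwW := hWu (k+1) (P k).2 _ hw'V hsol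
      have hu' : u' (k+1) = (P (k+1)).1 := by
        rw [hPsu k, ← hwW]
        abel
      refine ⟨hu', ?_⟩
      show φ' (k+1) = (P (k+1)).2
      rw [hPsf k, hφ', hu', hPsu k]
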